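/- arXiv:1902.10012 — 7 statements merged into one kernel-verified Lean document; each statement's English description precedes it below -/
import Mathlib

section
/- Let π be a group and 𝔸 a normal subgroup of π, and let (K_m)_{m≥1} be the subgroups defined by K_1 = π, K_2 = 𝔸 ⊔ Γ_2π, and K_m = [K_{m−1}, K_1] ⊔ [K_{m−2}, K_2] for m ≥ 3. Then (K_m) is the smallest N-series of π whose second term contains 𝔸: if (G_m)_{m≥1} is any N-series of π (so G_1 = π, G_{m+1} ≤ G_m, and [G_i, G_j] ≤ G_{i+j} for all i, j ≥ 1) with 𝔸 ≤ G_2, then K_m ≤ G_m for every m ≥ 1. -/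
variable {π : Type*} [Group π]

/-- The series `(K_m)` associated to a (normal) subgroup `𝔸 = A` of `π`:
`K_1 = π`, `K_2 = 𝔸 ⊔ Γ₂π` and `K_m = [K_{m-1}, K_1] ⊔ [K_{m-2}, K_2]` for `m ≥ 3`.
Here `Γ_m π = lowerCentralSeries π (m-1)`.  The value at `0` is a junk value `⊤`. -/
def altK (A : Subgroup π) : ℕ → Subgroup π
  | 0 => ⊤
  | 1 => ⊤
  | 2 => A ⊔ (⊤ : Subgroup π).lowerCentralSeries 1
  | (m + 3) => ⁅altK A (m + 2), altK A 1⁆ ⊔ ⁅altK A (m + 1), altK A 2⁆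

/-- (K_m) is the smallest N-series of π whose second term contains 𝔸. -/
theorem altK_smallest (π : Type*) [Group π] (A : Subgroup π) (hA : A.Normal)
    (G : ℕ → Subgroup π)
    (hG1 : G 1 = ⊤)
    (hGdec : ∀ m : ℕ, 1 ≤ m → G (m + 1) ≤ G m)
    (hGcomm : ∀ i j : ℕ, 1 ≤ i → 1 ≤ j → ⁅G i, G j⁆ ≤ G (i + j))
    (hA2 : A ≤ G 2) :
    ∀ m : ℕ, 1 ≤ m → altK A m ≤ G m := by
  intro m
  induction m using Nat.strong_induction_on with
  | _ m ih =>
    match m with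
    | 0 => intro h; omega
    | 1 => intro _; rw [hG1]; exact le_top
    | 2 =>
      intro _
      rw [altK]
      apply sup_le hA2
      have : (⊤ : Subgroup π).lowerCentralSeries 1 = ⁅G 1, G 1⁆ := by
        simp [Subgroup.lowerCentralSeries_succ, Subgroup.lowerCentralSeries_zero, hG1]
      rw [this]
      exact hGcomm 1 1 le_rfl le_rfl
    | (m + 3) =>
      intro _
      rw [altK]
      apply sup_le
      · calc ⁅altK A (m + 2), altK A 1⁆ ≤ ⁅G (m + 2), G 1⁆ :=
              Subgroup.commutator_mono (ih (m + 2) (by omega) (by omega))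
                (ih 1 (by omega) le_rfl)
          _ ≤ G (m + 3) := hGcomm (m + 2) 1 (by omega) le_rfl
      · calc ⁅altK A (m + 1), altK A 2⁆ ≤ ⁅G (m + 1), G 2⁆ :=
              Subgroup.commutator_mono (ih (m + 1) (by omega) (by omega))
                (ih 2 (by omega) (by omega))
          _ ≤ G (m + 3) := hGcomm (m + 1) 2 (by omega) (by omega)
end

section
/- Let π be a group, 𝔸 a normal subgroup of π, and (K_m)_{m≥1} the associated N-series (K_1 = π, K_2 = 𝔸 ⊔ Γ_2π, K_m = [K_{m−1}, K_1] ⊔ [K_{m−2}, K_2] for m ≥ 3). Then for every m ≥ 1, Γ_mπ ≤ K_m ≤ Γ_{⌈m/2⌉}π, where ⌈m/2⌉ denotes the least integer greater than or equal to m/2. -/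
variable {π : Type*} [Group π]

lemma lcs_succ_eq (G : Type*) [Group G] (n : ℕ) :
    (⊤ : Subgroup G).lowerCentralSeries (n + 1) = ⁅(⊤ : Subgroup G).lowerCentralSeries n, (⊤ : Subgroup G)⁆ := rfl

/-- For every m ≥ 1, Γ_m π ≤ K_m ≤ Γ_{⌈m/2⌉} π.  Here Γ_k π is (⊤ : Subgroup π).lowerCentralSeries (k-1)
and ⌈m/2⌉ = (m+1)/2 in natural division. -/
theorem lcs_le_altK_le_lcs (π : Type*) [Group π] (A : Subgroup π) (hA : A.Normal) :
    ∀ m : ℕ, 1 ≤ m →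
      (⊤ : Subgroup π).lowerCentralSeries (m - 1) ≤ altK A m ∧
      altK A m ≤ (⊤ : Subgroup π).lowerCentralSeries ((m + 1) / 2 - 1) := by
  intro m
  induction m using Nat.strong_induction_on with
  | _ m ih =>
    match m with
    | 0 => exact fun h => absurd h (by omega)
    | 1 => exact fun _ => ⟨by simp [altK], by simp [altK]⟩
    | 2 => exact fun _ => ⟨by rw [show altK A 2 = A ⊔ (⊤ : Subgroup π).lowerCentralSeries 1 by simp [altK]]; exact le_sup_right, by simp⟩
    | (n + 3) =>
      intro _
      obtain ⟨h1, h2⟩ := ih (n + 2) (by omega) (by omega)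
      obtain ⟨_, h4⟩ := ih (n + 1) (by omega) (by omega)
      have hK : altK A (n + 3) = ⁅altK A (n + 2), altK A 1⁆ ⊔ ⁅altK A (n + 1), altK A 2⁆ := by simp [altK]
      rw [hK]
      constructor
      · -- lcs (n+2) ≤ altK A (n+3)
        have : (⊤ : Subgroup π).lowerCentralSeries (n + 2) ≤ ⁅altK A (n + 2), altK A 1⁆ := by
          rw [lcs_succ_eq]
          exact Subgroup.commutator_mono (h1) (by simp [altK])
        exact le_trans this le_sup_left
      · -- upper bound
        have key : (n + 3 + 1) / 2 - 1 = (n + 2) / 2 := by omega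
        rw [key]
        apply sup_le
        · -- ⁅altK (n+2), altK 1⁆ ≤ lcs ((n+3)/2)
          have e1 : (n + 3) / 2 - 1 + 1 = (n + 3) / 2 := by omega
          calc ⁅altK A (n + 2), altK A 1⁆
              ≤ ⁅(⊤ : Subgroup π).lowerCentralSeries ((n + 3) / 2 - 1), (⊤ : Subgroup π)⁆ :=
                Subgroup.commutator_mono (h2) le_top
            _ = (⊤ : Subgroup π).lowerCentralSeries ((n + 3) / 2) := by rw [← lcs_succ_eq, e1]
            _ ≤ (⊤ : Subgroup π).lowerCentralSeries ((n + 2) / 2) :=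
                (⊤ : Subgroup π).lowerCentralSeries_antitone (by omega)
        · have e2 : (n + 2) / 2 - 1 + 1 = (n + 2) / 2 := by omega
          calc ⁅altK A (n + 1), altK A 2⁆
              ≤ ⁅(⊤ : Subgroup π).lowerCentralSeries ((n + 2) / 2 - 1), (⊤ : Subgroup π)⁆ :=
                Subgroup.commutator_mono (h4) le_top
            _ = (⊤ : Subgroup π).lowerCentralSeries ((n + 2) / 2) := by rw [← lcs_succ_eq, e2]
end

section
/- Let π be a group, 𝔸 a normal subgroup of π, and (K_m)_{m≥1} the associated N-series (K_1 = π, K_2 = 𝔸 ⊔ Γ_2π, K_m = [K_{m−1}, K_1] ⊔ [K_{m−2}, K_2] for m ≥ 3). Then for every m ≥ 1 there exists a subgroup N_m of π which is normal in π and contained in 𝔸 such that K_m = Γ_mπ ⊔ N_m. -/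
variable {π : Type*} [Group π]

section Aux

variable {G : Type*} [Group G]

lemma my_three_subgroups {A B C N : Subgroup G} [N.Normal]
    (h1 : ⁅⁅B, C⁆, A⁆ ≤ N) (h2 : ⁅⁅C, A⁆, B⁆ ≤ N) : ⁅⁅A, B⁆, C⁆ ≤ N := by
  let f := QuotientGroup.mk' N
  have hker : f.ker = N := QuotientGroup.ker_mk' N
  rw [← hker, ← Subgroup.map_eq_bot_iff, Subgroup.map_commutator, Subgroup.map_commutator] at h1 h2 ⊢
  exact Subgroup.commutator_commutator_eq_bot_of_rotate h1 h2

open scoped commutatorElement in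
lemma my_comm_sup_left (H K L : Subgroup G) [H.Normal] [K.Normal] [L.Normal] :
    ⁅H ⊔ K, L⁆ = ⁅H, L⁆ ⊔ ⁅K, L⁆ := by
  refine le_antisymm ?_ (sup_le (Subgroup.commutator_mono le_sup_left le_rfl)
    (Subgroup.commutator_mono le_sup_right le_rfl))
  rw [Subgroup.commutator_le]
  intro g hg l hl
  rw [← SetLike.mem_coe, Subgroup.mul_normal] at hg
  obtain ⟨h, hh, k, hk, rfl⟩ := hg
  have key : ⁅h * k, l⁆ = h * ⁅k, l⁆ * h⁻¹ * ⁅h, l⁆ := by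
    simp only [commutatorElement_def]; group
  rw [key]
  have n : Subgroup.Normal (⁅H, L⁆ ⊔ ⁅K, L⁆) := inferInstance
  exact mul_mem
    (n.conj_mem _ ((le_sup_right : ⁅K, L⁆ ≤ _) (Subgroup.commutator_mem_commutator hk hl)) h)
    ((le_sup_left : ⁅H, L⁆ ≤ _) (Subgroup.commutator_mem_commutator hh hl))

lemma my_comm_sup_right (H K L : Subgroup G) [H.Normal] [K.Normal] [L.Normal] :
    ⁅H, K ⊔ L⁆ = ⁅H, K⁆ ⊔ ⁅H, L⁆ := by
  rw [Subgroup.commutator_comm, my_comm_sup_left, Subgroup.commutator_comm H K,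
    Subgroup.commutator_comm H L]

lemma my_lcs_succ (n : ℕ) :
    (⊤ : Subgroup G).lowerCentralSeries (n + 1) = ⁅(⊤ : Subgroup G).lowerCentralSeries n, (⊤ : Subgroup G)⁆ := rfl

lemma my_lcs_comm (j i : ℕ) :
    ⁅(⊤ : Subgroup G).lowerCentralSeries i, (⊤ : Subgroup G).lowerCentralSeries j⁆ ≤ (⊤ : Subgroup G).lowerCentralSeries (i + j + 1) := by
  induction j generalizing i with
  | zero => rw [Subgroup.lowerCentralSeries_zero, ← my_lcs_succ]
  | succ j ih =>
    rw [my_lcs_succ, Subgroup.commutator_comm]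
    refine my_three_subgroups ?_ ?_
    · rw [Subgroup.commutator_comm (⊤ : Subgroup G), ← my_lcs_succ]
      exact (ih (i + 1)).trans (le_of_eq (by ring_nf))
    · refine (Subgroup.commutator_mono (ih i) le_top).trans ?_
      rw [← my_lcs_succ]
      exact le_of_eq (by ring_nf)

end Aux

/-- For every m ≥ 1 there is a normal subgroup N of π contained in 𝔸 with
K_m = Γ_m π ⊔ N  (Γ_m π is (⊤ : Subgroup π).lowerCentralSeries (m-1)). -/
theorem stmt4 (π : Type*) [Group π] (A : Subgroup π) (hA : A.Normal) :
    ∀ m : ℕ, 1 ≤ m → ∃ N : Subgroup π, N.Normal ∧ N ≤ A ∧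
      altK A m = (⊤ : Subgroup π).lowerCentralSeries (m - 1) ⊔ N := by
  haveI := hA
  suffices h : ∀ m : ℕ, (∃ N : Subgroup π, N.Normal ∧ N ≤ A ∧
        altK A (m + 1) = (⊤ : Subgroup π).lowerCentralSeries m ⊔ N) ∧
      (∃ N : Subgroup π, N.Normal ∧ N ≤ A ∧
        altK A (m + 2) = (⊤ : Subgroup π).lowerCentralSeries (m + 1) ⊔ N) by
    rintro (_ | m) hm
    · omega
    · simpa using (h m).1
  intro m
  induction m with
  | zero =>
    refine ⟨⟨⊥, inferInstance, bot_le, ?_⟩, ⟨A, hA, le_rfl, ?_⟩⟩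
    · show altK A 1 = (⊤ : Subgroup π).lowerCentralSeries 0 ⊔ ⊥
      rw [altK, Subgroup.lowerCentralSeries_zero, sup_bot_eq]
    · show altK A 2 = (⊤ : Subgroup π).lowerCentralSeries 1 ⊔ A
      rw [altK, sup_comm]
  | succ m ih =>
    obtain ⟨⟨N₁, hN₁n, hN₁A, hK₁⟩, ⟨N₂, hN₂n, hN₂A, hK₂⟩⟩ := ih
    refine ⟨⟨N₂, hN₂n, hN₂A, hK₂⟩, ?_⟩
    haveI := hN₁n; haveI := hN₂n
    set Γ : ℕ → Subgroup π := (⊤ : Subgroup π).lowerCentralSeries with hΓ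
    refine ⟨⁅N₂, (⊤ : Subgroup π)⁆ ⊔ (⁅Γ m, A⁆ ⊔ ⁅N₁, A ⊔ Γ 1⁆), inferInstance,
      ?_, ?_⟩
    · refine sup_le ((Subgroup.commutator_mono hN₂A le_rfl).trans
        (Subgroup.commutator_le_left A ⊤)) (sup_le (Subgroup.commutator_le_right _ A) ?_)
      exact (Subgroup.commutator_mono hN₁A le_top).trans (Subgroup.commutator_le_left A ⊤)
    · show altK A (m + 3) = _
      have e1 : ⁅altK A (m + 2), (⊤ : Subgroup π)⁆ = Γ (m + 2) ⊔ ⁅N₂, (⊤ : Subgroup π)⁆ := by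
        rw [hK₂, my_comm_sup_left, ← my_lcs_succ]
      have e2 : ⁅altK A (m + 1), A ⊔ Γ 1⁆
          = (⁅Γ m, A⁆ ⊔ ⁅Γ m, Γ 1⁆) ⊔ ⁅N₁, A ⊔ Γ 1⁆ := by
        rw [hK₁, my_comm_sup_left, my_comm_sup_right]
      rw [altK, show altK A 1 = ⊤ from by rw [altK], show altK A 2 = A ⊔ Γ 1 from by rw [altK], e1, e2]
      have hmm : ⁅Γ m, Γ 1⁆ ≤ Γ (m + 2) := my_lcs_comm 1 m
      have hG : Γ (m + 1 + 1) = Γ (m + 2) := rfl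
      rw [hG]
      set X₂ : Subgroup π := ⁅N₂, (⊤ : Subgroup π)⁆ with hX₂
      set XA : Subgroup π := ⁅Γ m, A⁆ with hXA
      set X₁ : Subgroup π := ⁅N₁, A ⊔ Γ 1⁆ with hX₁
      set XΓ : Subgroup π := ⁅Γ m, Γ 1⁆ with hXΓ
      set R : Subgroup π := Γ (m + 2) ⊔ (X₂ ⊔ (XA ⊔ X₁)) with hR
      set L : Subgroup π := (Γ (m + 2) ⊔ X₂) ⊔ ((XA ⊔ XΓ) ⊔ X₁) with hL
      have h1 : Γ (m + 2) ≤ R := le_sup_left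
      have h2 : X₂ ≤ R := le_sup_left.trans le_sup_right
      have h3 : XA ≤ R := (le_sup_left.trans le_sup_right).trans le_sup_right
      have h4 : XΓ ≤ R := hmm.trans h1
      have h5 : X₁ ≤ R := (le_sup_right.trans le_sup_right).trans le_sup_right
      have g1 : Γ (m + 2) ≤ L := le_sup_left.trans le_sup_left
      have g2 : X₂ ≤ L := le_sup_right.trans le_sup_left
      have g3 : XA ≤ L := (le_sup_left.trans le_sup_left).trans le_sup_right
      have g4 : X₁ ≤ L := le_sup_right.trans le_sup_right
      exact le_antisymm (sup_le (sup_le h1 h2) (sup_le (sup_le h3 h4) h5))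
        (sup_le g1 (sup_le g2 (sup_le g3 g4)))
end

section
/- Let π be a group, 𝔸 a normal subgroup of π, and (K_m)_{m≥1} the associated N-series (K_1 = π, K_2 = 𝔸 ⊔ Γ_2π, K_m = [K_{m−1}, K_1] ⊔ [K_{m−2}, K_2] for m ≥ 3). Assume π is residually nilpotent, i.e. ⋂_{m≥1} Γ_mπ = {1}. If φ is an automorphism of π such that φ(x)x⁻¹ ∈ K_{m+1} for every m ≥ 1 and every x ∈ π, then φ is the identity automorphism of π. (This is the group-theoretic core of the statement ⋂_{m≥1} J^𝔞_mℳ = {Id_Σ} of the alternative Johnson filtration.) -/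
variable {π : Type*} [Group π]

lemma altK_le_lcs (A : Subgroup π) :
    ∀ n : ℕ, altK A (n + 2) ≤ (⊤ : Subgroup π).lowerCentralSeries ((n + 1) / 2)
  | 0 => by simp
  | 1 => by
      have e : altK A (1 + 2) = ⁅altK A 2, altK A 1⁆ ⊔ ⁅altK A 1, altK A 2⁆ := by
        rw [show (1:ℕ) + 2 = 0 + 3 from rfl]; simp only [altK]; norm_num [altK]
      rw [e, show ((1:ℕ) + 1) / 2 = 1 from rfl]
      rw [Subgroup.lowerCentralSeries_succ]
      exact sup_le (Subgroup.commutator_mono le_top le_top)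
        (Subgroup.commutator_mono le_top le_top)
  | (n + 2) => by
      have e : altK A (n + 2 + 2) = ⁅altK A (n + 3), altK A 1⁆ ⊔ ⁅altK A (n + 2), altK A 2⁆ := by
        rw [show n + 2 + 2 = n + 1 + 3 by omega]; simp only [altK]
      rw [e, show (n + 2 + 1) / 2 = (n + 3) / 2 from rfl]
      apply sup_le
      · calc ⁅altK A (n + 3), altK A 1⁆ ≤ ⁅(⊤ : Subgroup π).lowerCentralSeries ((n + 2) / 2), ⊤⁆ :=
              Subgroup.commutator_mono (altK_le_lcs A (n + 1)) le_top
          _ = (⊤ : Subgroup π).lowerCentralSeries ((n + 2) / 2 + 1) := (Subgroup.lowerCentralSeries_succ _ _).symm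
          _ ≤ (⊤ : Subgroup π).lowerCentralSeries ((n + 3) / 2) := Subgroup.lowerCentralSeries_antitone _ (by omega)
      · calc ⁅altK A (n + 2), altK A 2⁆ ≤ ⁅(⊤ : Subgroup π).lowerCentralSeries ((n + 1) / 2), ⊤⁆ :=
              Subgroup.commutator_mono (altK_le_lcs A n) le_top
          _ = (⊤ : Subgroup π).lowerCentralSeries ((n + 1) / 2 + 1) := (Subgroup.lowerCentralSeries_succ _ _).symm
          _ ≤ (⊤ : Subgroup π).lowerCentralSeries ((n + 3) / 2) := Subgroup.lowerCentralSeries_antitone _ (by omega)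

/-- If π is residually nilpotent and φ is an automorphism of π with φ(x)x⁻¹ ∈ K_{m+1}
for every m ≥ 1 and every x ∈ π, then φ is the identity. -/
theorem stmt5 (π : Type*) [Group π] (A : Subgroup π) (hA : A.Normal)
    (hres : (⨅ m : ℕ, (⊤ : Subgroup π).lowerCentralSeries m) = ⊥)
    (φ : π ≃* π)
    (hφ : ∀ m : ℕ, 1 ≤ m → ∀ x : π, φ x * x⁻¹ ∈ altK A (m + 1)) :
    ∀ x : π, φ x = x := by
  intro x
  have hmem : φ x * x⁻¹ ∈ (⨅ m : ℕ, (⊤ : Subgroup π).lowerCentralSeries m) := by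
    refine Subgroup.mem_iInf.2 fun k => ?_
    have h := hφ (2 * k + 1) (by omega) x
    have hle := altK_le_lcs A (2 * k)
    have : (2 * k + 1) / 2 = k := by omega
    rw [this] at hle
    exact hle h
  rw [hres, Subgroup.mem_bot] at hmem
  exact mul_inv_eq_one.mp hmem
end

section
/- Let π be a group, 𝔸 a normal subgroup of π, and (K_m)_{m≥1} the associated N-series (K_1 = π, K_2 = 𝔸 ⊔ Γ_2π, K_m = [K_{m−1}, K_1] ⊔ [K_{m−2}, K_2] for m ≥ 3). Let m ≥ 1 and let φ be an automorphism of π such that φ(x)x⁻¹ ∈ Γ_{m+1}π for every x ∈ π. Then φ(x)x⁻¹ ∈ K_m for every x ∈ π and φ(y)y⁻¹ ∈ K_{m+1} for every y ∈ K_2. (This proves the inclusion J_mℳ ⊆ J^𝔞_{m−1}ℳ; together with the previous inclusion it shows the Johnson filtration and the alternative Johnson filtration are cofinal.) -/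
variable {π : Type*} [Group π]

lemma lcs_le_altK (A : Subgroup π) : ∀ n, (⊤ : Subgroup π).lowerCentralSeries n ≤ altK A (n + 1) := by
  intro n
  induction n with
  | zero => simp [altK]
  | succ k ih =>
    rw [Subgroup.lowerCentralSeries_succ]
    match k, ih with
    | 0, _ =>
      rw [← Subgroup.lowerCentralSeries_succ, altK]
      exact le_sup_right
    | (j + 1), ih =>
      rw [show j + 1 + 1 + 1 = j + 3 from rfl, altK]
      refine le_sup_of_le_left (Subgroup.commutator_mono ih ?_)
      rw [altK]

/-- If φ is an automorphism of π with φ(x)x⁻¹ ∈ Γ_{m+1}π for every x, then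
φ(x)x⁻¹ ∈ K_m for every x ∈ π and φ(y)y⁻¹ ∈ K_{m+1} for every y ∈ K₂. -/
theorem stmt8 (π : Type*) [Group π] (A : Subgroup π) (hA : A.Normal)
    (m : ℕ) (hm : 1 ≤ m) (φ : π ≃* π)
    (hφ : ∀ x : π, φ x * x⁻¹ ∈ (⊤ : Subgroup π).lowerCentralSeries m) :
    (∀ x : π, φ x * x⁻¹ ∈ altK A m) ∧
    (∀ y : π, y ∈ altK A 2 → φ y * y⁻¹ ∈ altK A (m + 1)) := by
  obtain ⟨k, rfl⟩ := Nat.exists_eq_add_of_le hm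
  constructor
  · intro x
    have h1 : (⊤ : Subgroup π).lowerCentralSeries (1 + k) ≤ (⊤ : Subgroup π).lowerCentralSeries k :=
      Subgroup.lowerCentralSeries_antitone _ (by omega)
    have := lcs_le_altK A k (h1 (hφ x)); rwa [Nat.add_comm] at this
  · intro y _
    have := lcs_le_altK A (1 + k) (hφ y)
    simpa using this
end

section
/- Let π be a group, 𝔸 a normal subgroup of π, (K_m)_{m≥1} the associated N-series (K_1 = π, K_2 = 𝔸 ⊔ Γ_2π, K_m = [K_{m−1}, K_1] ⊔ [K_{m−2}, K_2] for m ≥ 3), and let p : π → π′ := π/𝔸 be the quotient map. Let m ≥ 1 and let φ be an automorphism of π such that φ(x)x⁻¹ ∈ K_{m+1} for every x ∈ π and φ(y)y⁻¹ ∈ K_{m+2} for every y ∈ K_2. Then p(φ(α)) ∈ Γ_{m+2}π′ for every α ∈ 𝔸. (This proves the inclusion J^𝔞_mℳ ⊆ J^L_{m+1}ℳ of the alternative Johnson filtration in the Johnson–Levine filtration.) -/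
variable {π : Type*} [Group π]

/-- The general three subgroups lemma for normal subgroups. -/
lemma three_subgroups {G : Type*} [Group G] (A B C : Subgroup G)
    [A.Normal] [B.Normal] [C.Normal] :
    ⁅⁅A, B⁆, C⁆ ≤ ⁅⁅B, C⁆, A⁆ ⊔ ⁅⁅C, A⁆, B⁆ := by
  set N : Subgroup G := ⁅⁅B, C⁆, A⁆ ⊔ ⁅⁅C, A⁆, B⁆ with hN
  have : N.Normal := Subgroup.sup_normal _ _
  set q := QuotientGroup.mk' N with hq
  have hker : N = q.ker := (QuotientGroup.ker_mk' N).symm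
  have h1 : ⁅⁅Subgroup.map q B, Subgroup.map q C⁆, Subgroup.map q A⁆ = ⊥ := by
    rw [← Subgroup.map_commutator, ← Subgroup.map_commutator, Subgroup.map_eq_bot_iff, ← hker]
    exact le_sup_left
  have h2 : ⁅⁅Subgroup.map q C, Subgroup.map q A⁆, Subgroup.map q B⁆ = ⊥ := by
    rw [← Subgroup.map_commutator, ← Subgroup.map_commutator, Subgroup.map_eq_bot_iff, ← hker]
    exact le_sup_right
  have h3 := Subgroup.commutator_commutator_eq_bot_of_rotate h1 h2
  rw [← Subgroup.map_commutator, ← Subgroup.map_commutator, Subgroup.map_eq_bot_iff, ← hker] at h3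
  exact h3

/-- `⁅Γ_{a+1}, Γ_{b+1}⁆ ≤ Γ_{a+b+2}` for the lower central series. -/
lemma lcs_commutator_le (G : Type*) [Group G] :
    ∀ (b a : ℕ), ⁅(⊤ : Subgroup G).lowerCentralSeries a, (⊤ : Subgroup G).lowerCentralSeries b⁆ ≤
      (⊤ : Subgroup G).lowerCentralSeries (a + b + 1)
  | 0, a => by
      rw [Subgroup.lowerCentralSeries_zero]
      exact le_of_eq (lcs_succ_eq G a).symm
  | (b + 1), a => by
      have h1 : ⁅(⊤ : Subgroup G).lowerCentralSeries a, (⊤ : Subgroup G).lowerCentralSeries (b + 1)⁆ =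
          ⁅⁅(⊤ : Subgroup G).lowerCentralSeries b, (⊤ : Subgroup G)⁆, (⊤ : Subgroup G).lowerCentralSeries a⁆ := by
        rw [Subgroup.commutator_comm, lcs_succ_eq]
      rw [h1]
      refine (three_subgroups _ _ _).trans (sup_le ?_ ?_)
      · have e : ⁅(⊤ : Subgroup G), (⊤ : Subgroup G).lowerCentralSeries a⁆ = (⊤ : Subgroup G).lowerCentralSeries (a + 1) := by
          rw [Subgroup.commutator_comm, ← lcs_succ_eq]
        rw [e]
        have h := lcs_commutator_le G b (a + 1)
        rwa [show a + 1 + b + 1 = a + (b + 1) + 1 by omega] at h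
      · have h2 : ⁅(⊤ : Subgroup G).lowerCentralSeries a, (⊤ : Subgroup G).lowerCentralSeries b⁆ ≤
            (⊤ : Subgroup G).lowerCentralSeries (a + b + 1) := lcs_commutator_le G b a
        have h3 : ⁅⁅(⊤ : Subgroup G).lowerCentralSeries a, (⊤ : Subgroup G).lowerCentralSeries b⁆, (⊤ : Subgroup G)⁆
            ≤ ⁅(⊤ : Subgroup G).lowerCentralSeries (a + b + 1), (⊤ : Subgroup G)⁆ :=
          Subgroup.commutator_mono h2 le_rfl
        rw [show a + (b + 1) + 1 = (a + b + 1) + 1 by omega, lcs_succ_eq]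
        exact h3

/-- The image of `K_{n+1}` in `π/A` lies in `Γ_{n+1}(π/A) = lowerCentralSeries (π/A) n`. -/
lemma map_altK_le (A : Subgroup π) [A.Normal] :
    ∀ n : ℕ, Subgroup.map (QuotientGroup.mk' A) (altK A (n + 1)) ≤
      (⊤ : Subgroup (π ⧸ A)).lowerCentralSeries n
  | 0 => by simp [altK]
  | 1 => by
      have e : altK A (1 + 1) = A ⊔ (⊤ : Subgroup π).lowerCentralSeries 1 := by rw [altK]
      rw [e, Subgroup.map_sup]
      refine sup_le ?_ (by rw [Subgroup.map_lowerCentralSeries, Subgroup.map_top_of_surjective _ (QuotientGroup.mk'_surjective A)])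
      have hbot : Subgroup.map (QuotientGroup.mk' A) A = ⊥ :=
        (Subgroup.map_eq_bot_iff A).mpr (le_of_eq (QuotientGroup.ker_mk' A).symm)
      rw [hbot]
      exact bot_le
  | (k + 2) => by
      have e : altK A (k + 2 + 1) =
          ⁅altK A (k + 2), altK A 1⁆ ⊔ ⁅altK A (k + 1), altK A 2⁆ := by
        conv_lhs => rw [show k + 2 + 1 = k + 3 from rfl, altK]
      rw [e, Subgroup.map_sup, Subgroup.map_commutator, Subgroup.map_commutator]
      refine sup_le ?_ ?_
      · calc ⁅Subgroup.map (QuotientGroup.mk' A) (altK A (k + 2)),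
              Subgroup.map (QuotientGroup.mk' A) (altK A 1)⁆
            ≤ ⁅(⊤ : Subgroup (π ⧸ A)).lowerCentralSeries (k + 1), (⊤ : Subgroup (π ⧸ A))⁆ :=
              Subgroup.commutator_mono (map_altK_le A (k + 1)) le_top
          _ = (⊤ : Subgroup (π ⧸ A)).lowerCentralSeries (k + 2) := (lcs_succ_eq _ _).symm
      · calc ⁅Subgroup.map (QuotientGroup.mk' A) (altK A (k + 1)),
              Subgroup.map (QuotientGroup.mk' A) (altK A 2)⁆
            ≤ ⁅(⊤ : Subgroup (π ⧸ A)).lowerCentralSeries k, (⊤ : Subgroup (π ⧸ A)).lowerCentralSeries 1⁆ :=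
              Subgroup.commutator_mono (map_altK_le A k) (map_altK_le A 1)
          _ ≤ (⊤ : Subgroup (π ⧸ A)).lowerCentralSeries (k + 2) := lcs_commutator_le _ 1 k

/-- If φ represents an element of the m-th term of the alternative Johnson filtration
(that is, φ(x)x⁻¹ ∈ K_{m+1} for x ∈ π and φ(y)y⁻¹ ∈ K_{m+2} for y ∈ K₂), then the image
of φ(α) in π' = π/A lies in Γ_{m+2}π' for every α ∈ 𝔸. -/
theorem stmt9 (π : Type*) [Group π] (A : Subgroup π) [A.Normal]
    (m : ℕ) (hm : 1 ≤ m) (φ : π ≃* π)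
    (hφ1 : ∀ x : π, φ x * x⁻¹ ∈ altK A (m + 1))
    (hφ2 : ∀ y : π, y ∈ altK A 2 → φ y * y⁻¹ ∈ altK A (m + 2)) :
    ∀ α ∈ A, QuotientGroup.mk' A (φ α) ∈ (⊤ : Subgroup (π ⧸ A)).lowerCentralSeries (m + 1) := by
  intro α hα
  have hαK2 : α ∈ altK A 2 := by
    have e : altK A 2 = A ⊔ (⊤ : Subgroup π).lowerCentralSeries 1 := by rw [altK]
    rw [e]
    exact Subgroup.mem_sup_left hα
  have h := hφ2 α hαK2
  have hmem : QuotientGroup.mk' A (φ α * α⁻¹) ∈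
      Subgroup.map (QuotientGroup.mk' A) (altK A (m + 2)) :=
    Subgroup.mem_map_of_mem _ h
  have heq : QuotientGroup.mk' A (φ α) = QuotientGroup.mk' A (φ α * α⁻¹) := by
    rw [map_mul, map_inv]
    have : QuotientGroup.mk' A α = 1 := (QuotientGroup.eq_one_iff α).mpr hα
    rw [this]; group
  rw [heq]
  exact map_altK_le A (m + 1) hmem
end

section
/- Let π be the free group on 2g generators α_1, …, α_g, β_1, …, β_g (g ≥ 1), let 𝔸 be the normal closure in π of {α_1, …, α_g}, and let (K_m)_{m≥1} be the associated N-series (K_1 = π, K_2 = 𝔸 ⊔ Γ_2π, K_m = [K_{m−1}, K_1] ⊔ [K_{m−2}, K_2] for m ≥ 3). Let m ≥ 1 and let φ be an automorphism of π fixing the boundary word: φ(∏_{i=1}^g [β_i⁻¹, α_i]) = ∏_{i=1}^g [β_i⁻¹, α_i], where [x,y] = xyx⁻¹y⁻¹ and the product is taken in order of increasing i. Set δ_i := β_i⁻¹ φ(β_i) and γ_i := φ(α_i) α_i⁻¹, and assume that δ_i ∈ K_{m+1} and γ_i ∈ K_{m+2} for every i. Then ∏_{i=1}^g [β_i⁻¹,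 γ_i]·[δ_i⁻¹, α_i] ∈ K_{m+4}. (This is the key identity proving that the m-th alternative Johnson homomorphism takes values in symplectic derivations, i.e. Ξ_m τ^𝔞_m(h) = 0.) -/
variable {π : Type*} [Group π]

open scoped commutatorElement

/-- The free generators α_i of the free group on 2g generators. -/
def gen_α {g : ℕ} (i : Fin g) : FreeGroup (Fin g ⊕ Fin g) := FreeGroup.of (Sum.inl i)

/-- The free generators β_i of the free group on 2g generators. -/
def gen_β {g : ℕ} (i : Fin g) : FreeGroup (Fin g ⊕ Fin g) := FreeGroup.of (Sum.inr i)

/-- 𝔸: the normal closure of the α_i in the free group on α_1,…,α_g,β_1,…,β_g. -/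
def AA (g : ℕ) : Subgroup (FreeGroup (Fin g ⊕ Fin g)) :=
  Subgroup.normalClosure (Set.range fun i : Fin g => gen_α i)

open Pointwise

section AuxAltK

theorem altK_zero' (A : Subgroup π) : altK A 0 = ⊤ := by rw [altK]
theorem altK_one' (A : Subgroup π) : altK A 1 = ⊤ := by rw [altK]
theorem altK_two' (A : Subgroup π) : altK A 2 = A ⊔ (⊤ : Subgroup π).lowerCentralSeries 1 := by rw [altK]
theorem altK_add3 (A : Subgroup π) (k : ℕ) :
    altK A (k+3) = ⁅altK A (k + 2), altK A 1⁆ ⊔ ⁅altK A (k + 1), altK A 2⁆ := by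
  rw [altK.eq_def]

theorem altK_add3' (A : Subgroup π) (k : ℕ) :
    altK A (k+4) = ⁅altK A (k + 3), altK A 1⁆ ⊔ ⁅altK A (k + 2), altK A 2⁆ := altK_add3 A (k+1)

theorem altK_mono_eq (A : Subgroup π) {x y : ℕ} (h : x = y) : altK A x ≤ altK A y := by rw [h]

theorem altK_normal (A : Subgroup π) [hA : A.Normal] : ∀ n, (altK A n).Normal
  | 0 => by rw [altK]; infer_instance
  | 1 => by rw [altK]; infer_instance
  | 2 => by rw [altK]; infer_instance
  | (n+3) => by
    rw [altK_add3]
    have i1 : (altK A (n+2)).Normal := altK_normal A (n+2)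
    have i2 : (altK A (n+1)).Normal := altK_normal A (n+1)
    have i3 : (altK A 1).Normal := altK_normal A 1
    have i4 : (altK A 2).Normal := altK_normal A 2
    exact Subgroup.sup_normal _ _

theorem altK_succ_le (A : Subgroup π) [hA : A.Normal] : ∀ n, altK A (n+1) ≤ altK A n
  | 0 => by rw [altK_zero']; exact le_top
  | 1 => by rw [altK_one']; exact le_top
  | 2 => by
    have i1 : (altK A 2).Normal := altK_normal A 2
    have i2 : (altK A 1).Normal := altK_normal A 1
    rw [altK_add3]
    exact sup_le (Subgroup.commutator_le_left _ _) (Subgroup.commutator_le_right _ _)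
  | (n+3) => by
    have i1 : (altK A (n+3)).Normal := altK_normal A (n+3)
    rw [altK_add3' A n]
    refine sup_le (Subgroup.commutator_le_left _ _) ?_
    calc ⁅altK A (n + 2), altK A 2⁆ ≤ ⁅altK A (n + 2), altK A 1⁆ :=
          Subgroup.commutator_mono le_rfl (by rw [altK_one']; exact le_top)
      _ ≤ altK A (n+3) := by rw [altK_add3 A n]; exact le_sup_left

theorem altK_antitone (A : Subgroup π) [hA : A.Normal] {a b : ℕ} (h : a ≤ b) :
    altK A b ≤ altK A a := by
  induction b, h using Nat.le_induction with
  | base => exact le_rfl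
  | succ n hn ih => exact le_trans (altK_succ_le A n) ih

theorem commutator_commutator_le_of_rotate {G : Type*} [Group G] {H₁ H₂ H₃ N : Subgroup G}
    [N.Normal] (h1 : ⁅⁅H₂, H₃⁆, H₁⁆ ≤ N) (h2 : ⁅⁅H₃, H₁⁆, H₂⁆ ≤ N) : ⁅⁅H₁, H₂⁆, H₃⁆ ≤ N := by
  have k : ∀ A B C : Subgroup G, ⁅⁅A, B⁆, C⁆ ≤ N ↔
      ⁅⁅A.map (QuotientGroup.mk' N), B.map (QuotientGroup.mk' N)⁆,
        C.map (QuotientGroup.mk' N)⁆ = ⊥ := by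
    intro A B C
    rw [← Subgroup.map_commutator, ← Subgroup.map_commutator, Subgroup.map_eq_bot_iff,
      QuotientGroup.ker_mk']
  rw [k]
  exact Subgroup.commutator_commutator_eq_bot_of_rotate ((k _ _ _).mp h1) ((k _ _ _).mp h2)

theorem commutator_sup_le_of_le {G : Type*} [Group G] {H K L M : Subgroup G}
    [hM : M.Normal] [L.Normal] (hK : ⁅H, K⁆ ≤ M) (hL : ⁅H, L⁆ ≤ M) : ⁅H, K ⊔ L⁆ ≤ M := by
  rw [Subgroup.commutator_le]
  intro g hg h hh
  have hh' : h ∈ (K : Set G) * (L : Set G) := by rw [← Subgroup.mul_normal K L]; exact hh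
  obtain ⟨k, hk, l, hl, rfl⟩ := hh'
  have e : ⁅g, k * l⁆ = ⁅g, k⁆ * (k * ⁅g, l⁆ * k⁻¹) := by
    simp only [commutatorElement_def]; group
  rw [e]
  have m1 : ⁅g, k⁆ ∈ M := hK (Subgroup.commutator_mem_commutator hg hk)
  have m2 : ⁅g, l⁆ ∈ M := hL (Subgroup.commutator_mem_commutator hg hl)
  exact M.mul_mem m1 (hM.conj_mem _ m2 k)

theorem altK_comm_one (A : Subgroup π) : ∀ a, ⁅altK A a, altK A 1⁆ ≤ altK A (a+1)
  | 0 => by rw [altK_one']; exact le_top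
  | 1 => by
    rw [altK_one', altK_two', Subgroup.top_lowerCentralSeries_one]
    exact le_sup_right
  | (a+2) => by rw [altK_add3]; exact le_sup_left

theorem altK_comm_two (A : Subgroup π) (a : ℕ) : ⁅altK A (a+1), altK A 2⁆ ≤ altK A (a+3) := by
  rw [altK_add3]; exact le_sup_right

theorem altK_comm (A : Subgroup π) [hA : A.Normal] :
    ∀ b, 1 ≤ b → ∀ a, 1 ≤ a → ⁅altK A a, altK A b⁆ ≤ altK A (a + b) := by
  intro b
  induction b using Nat.strong_induction_on with
  | _ b ih =>
    match b with
    | 0 => intro h; exact absurd h (by norm_num)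
    | 1 => exact fun _ a _ => altK_comm_one A a
    | 2 =>
      intro _ a ha
      obtain ⟨a', rfl⟩ : ∃ a', a = a' + 1 := ⟨a - 1, by omega⟩
      exact altK_comm_two A a'
    | (b+3) =>
      intro _ a ha
      obtain ⟨a', rfl⟩ : ∃ a', a = a' + 1 := ⟨a - 1, by omega⟩
      have Hn : ∀ k, (altK A k).Normal := altK_normal A
      have i1 := Hn (a' + 1 + (b + 3))
      have i2 := Hn 2
      have i3 := Hn (b+1)
      rw [altK_add3]
      refine commutator_sup_le_of_le ?_ ?_
      · rw [Subgroup.commutator_comm]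
        refine commutator_commutator_le_of_rotate ?_ ?_
        · refine le_trans (Subgroup.commutator_mono
            (le_trans (Subgroup.commutator_comm_le _ _) (altK_comm_one A (a'+1))) le_rfl) ?_
          refine le_trans (ih (b+2) (by omega) (by omega) (a'+1+1) (by omega)) ?_
          exact altK_mono_eq A (by omega)
        · refine le_trans (Subgroup.commutator_mono
            (ih (b+2) (by omega) (by omega) (a'+1) (by omega)) le_rfl) ?_
          refine le_trans (altK_comm_one A (a'+1+(b+2))) ?_
          exact altK_mono_eq A (by omega)
      · rw [Subgroup.commutator_comm]
        refine commutator_commutator_le_of_rotate ?_ ?_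
        · refine le_trans (Subgroup.commutator_mono
            (le_trans (Subgroup.commutator_comm_le _ _) (altK_comm_two A a')) le_rfl) ?_
          refine le_trans (ih (b+1) (by omega) (by omega) (a'+3) (by omega)) ?_
          exact altK_mono_eq A (by omega)
        · refine le_trans (Subgroup.commutator_mono
            (ih (b+1) (by omega) (by omega) (a'+1) (by omega)) le_rfl) ?_
          refine le_trans (Subgroup.commutator_mono
            (altK_mono_eq A (show a'+1+(b+1) = a'+b+1+1 by omega)) le_rfl) ?_
          refine le_trans (altK_comm_two A (a'+b+1)) ?_
          exact altK_mono_eq A (by omega)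

theorem key_identity {H : Type*} [Group H] (a b c d : H)
    (h1 : ∀ x : H, ⁅b⁻¹, c⁆ * x = x * ⁅b⁻¹, c⁆)
    (h2 : ∀ x : H, ⁅d⁻¹, a⁆ * x = x * ⁅d⁻¹, a⁆)
    (h3 : d⁻¹ * c = c * d⁻¹)
    (h4 : d⁻¹ * ⁅b⁻¹, a⁆ = ⁅b⁻¹, a⁆ * d⁻¹)
    (h5 : c * ⁅b⁻¹, a⁆ = ⁅b⁻¹, a⁆ * c) :
    ⁅(b*d)⁻¹, c*a⁆ = ⁅b⁻¹, c⁆ * ⁅d⁻¹, a⁆ * ⁅b⁻¹, a⁆ := by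
  have A1 : ∀ x : H, d⁻¹ * (⁅b⁻¹, c⁆ * x) = ⁅b⁻¹, c⁆ * (d⁻¹ * x) := fun x => by
    rw [← mul_assoc, ← h1 d⁻¹, mul_assoc]
  have A3 : ∀ x : H, d⁻¹ * (c * x) = c * (d⁻¹ * x) := fun x => by
    rw [← mul_assoc, h3, mul_assoc]
  have A4 : ∀ x : H, d⁻¹ * (⁅b⁻¹, a⁆ * x) = ⁅b⁻¹, a⁆ * (d⁻¹ * x) := fun x => by
    rw [← mul_assoc, h4, mul_assoc]
  have A5 : ∀ x : H, c * (⁅b⁻¹, a⁆ * x) = ⁅b⁻¹, a⁆ * (c * x) := fun x => by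
    rw [← mul_assoc, h5, mul_assoc]
  calc ⁅(b*d)⁻¹, c*a⁆
      = d⁻¹ * (⁅b⁻¹, c⁆ * (c * (b⁻¹ * (a * (b * (d * (a⁻¹ * c⁻¹))))))) := by
        simp only [commutatorElement_def, mul_inv_rev, inv_inv]; group
    _ = ⁅b⁻¹, c⁆ * (d⁻¹ * (c * (b⁻¹ * (a * (b * (d * (a⁻¹ * c⁻¹))))))) := by rw [A1]
    _ = ⁅b⁻¹, c⁆ * (c * (d⁻¹ * (b⁻¹ * (a * (b * (d * (a⁻¹ * c⁻¹))))))) := by rw [A3]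
    _ = ⁅b⁻¹, c⁆ * (c * (d⁻¹ * (⁅b⁻¹, a⁆ * (a * (d * (a⁻¹ * c⁻¹)))))) := by
        simp only [commutatorElement_def, mul_inv_rev, inv_inv]; group
    _ = ⁅b⁻¹, c⁆ * (c * (⁅b⁻¹, a⁆ * (d⁻¹ * (a * (d * (a⁻¹ * c⁻¹)))))) := by rw [A4]
    _ = ⁅b⁻¹, c⁆ * (c * (⁅b⁻¹, a⁆ * (⁅d⁻¹, a⁆ * c⁻¹))) := by
        simp only [commutatorElement_def, mul_inv_rev, inv_inv]; group
    _ = ⁅b⁻¹, c⁆ * (c * (⁅b⁻¹, a⁆ * (c⁻¹ * ⁅d⁻¹, a⁆))) := by rw [h2 c⁻¹]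
    _ = ⁅b⁻¹, c⁆ * (⁅b⁻¹, a⁆ * (c * (c⁻¹ * ⁅d⁻¹, a⁆))) := by rw [A5]
    _ = ⁅b⁻¹, c⁆ * (⁅b⁻¹, a⁆ * ⁅d⁻¹, a⁆) := by rw [mul_inv_cancel_left]
    _ = ⁅b⁻¹, c⁆ * ⁅d⁻¹, a⁆ * ⁅b⁻¹, a⁆ := by rw [← h2 ⁅b⁻¹, a⁆, mul_assoc]

theorem central_pull_list {H : Type*} [Group H] :
    ∀ l : List (H × H), (∀ p ∈ l, p.1 ∈ Subgroup.center H) →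
      (l.map fun p => p.1 * p.2).prod = (l.map Prod.fst).prod * (l.map Prod.snd).prod := by
  intro l
  induction l with
  | nil => intro _; simp
  | cons p t ih =>
    intro h
    have ht := ih (fun q hq => h q (List.mem_cons_of_mem _ hq))
    simp only [List.map_cons, List.prod_cons, ht]
    have hZ : (t.map Prod.fst).prod ∈ Subgroup.center H := by
      refine Subgroup.list_prod_mem _ ?_
      intro x hx
      obtain ⟨q, hq, rfl⟩ := List.mem_map.mp hx
      exact h q (List.mem_cons_of_mem _ hq)
    have c1 := Subgroup.mem_center_iff.mp hZ p.2
    calc p.1 * p.2 * ((t.map Prod.fst).prod * (t.map Prod.snd).prod)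
        = p.1 * ((p.2 * (t.map Prod.fst).prod) * (t.map Prod.snd).prod) := by
          simp [mul_assoc]
      _ = p.1 * (((t.map Prod.fst).prod * p.2) * (t.map Prod.snd).prod) := by rw [c1]
      _ = p.1 * (t.map Prod.fst).prod * (p.2 * (t.map Prod.snd).prod) := by
          simp [mul_assoc]

theorem central_pull_ofFn {H : Type*} [Group H] (n : ℕ) (z w : Fin n → H)
    (hz : ∀ i, z i ∈ Subgroup.center H) :
    (List.ofFn fun i => z i * w i).prod = (List.ofFn z).prod * (List.ofFn w).prod := by
  have h := central_pull_list (List.ofFn fun i => (z i, w i)) ?_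
  · simpa [List.map_ofFn, Function.comp_def] using h
  · intro p hp
    rw [List.mem_ofFn] at hp
    obtain ⟨i, rfl⟩ := hp
    exact hz i

end AuxAltK

/-- If φ fixes the boundary word ∏ [β_i⁻¹, α_i], and δ_i = β_i⁻¹ φ(β_i) ∈ K_{m+1},
γ_i = φ(α_i) α_i⁻¹ ∈ K_{m+2}, then ∏ [β_i⁻¹, γ_i]·[δ_i⁻¹, α_i] ∈ K_{m+4}. -/
theorem stmt10 (g m : ℕ) (hg : 1 ≤ g) (hm : 1 ≤ m)
    (φ : FreeGroup (Fin g ⊕ Fin g) ≃* FreeGroup (Fin g ⊕ Fin g))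
    (hφ : φ ((List.ofFn fun i : Fin g => ⁅(gen_β i)⁻¹, gen_α i⁆).prod)
        = (List.ofFn fun i : Fin g => ⁅(gen_β i)⁻¹, gen_α i⁆).prod)
    (hδ : ∀ i : Fin g, (gen_β i)⁻¹ * φ (gen_β i) ∈ altK (AA g) (m + 1))
    (hγ : ∀ i : Fin g, φ (gen_α i) * (gen_α i)⁻¹ ∈ altK (AA g) (m + 2)) :
    (List.ofFn fun i : Fin g =>
        ⁅(gen_β i)⁻¹, φ (gen_α i) * (gen_α i)⁻¹⁆ *
        ⁅((gen_β i)⁻¹ * φ (gen_β i))⁻¹, gen_α i⁆).prod ∈ altK (AA g) (m + 4) := by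
  haveI hAn : (AA g).Normal := Subgroup.normalClosure_normal
  have Hn : ∀ k, (altK (AA g) k).Normal := fun k => altK_normal (AA g) k
  haveI hN4 : (altK (AA g) (m+4)).Normal := Hn (m+4)
  set f := QuotientGroup.mk' (altK (AA g) (m+4)) with hf
  -- basic memberships
  have hβ1 : ∀ i : Fin g, (gen_β i)⁻¹ ∈ altK (AA g) 1 := fun i => by
    rw [altK_one']; exact Subgroup.mem_top _
  have hα2 : ∀ i : Fin g, gen_α i ∈ altK (AA g) 2 := fun i => by
    rw [altK_two']
    exact Subgroup.mem_sup_left (Subgroup.subset_normalClosure (Set.mem_range_self i))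
  have e3 : altK (AA g) 3
      = ⁅altK (AA g) 2, altK (AA g) 1⁆ ⊔ ⁅altK (AA g) 1, altK (AA g) 2⁆ := altK_add3 (AA g) 0
  have hw : ∀ i : Fin g, ⁅(gen_β i)⁻¹, gen_α i⁆ ∈ altK (AA g) 3 := fun i => by
    rw [e3]
    exact Subgroup.mem_sup_right (Subgroup.commutator_mem_commutator (hβ1 i) (hα2 i))
  have hz1 : ∀ i : Fin g,
      ⁅(gen_β i)⁻¹, φ (gen_α i) * (gen_α i)⁻¹⁆ ∈ altK (AA g) (m+3) := fun i => by
    have h := Subgroup.commutator_mem_commutator (hβ1 i) (hγ i)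
    refine le_trans (Subgroup.commutator_comm_le _ _) ?_ h
    rw [altK_add3 (AA g) m]; exact le_sup_left
  have hz2 : ∀ i : Fin g,
      ⁅((gen_β i)⁻¹ * φ (gen_β i))⁻¹, gen_α i⁆ ∈ altK (AA g) (m+3) := fun i => by
    have h := Subgroup.commutator_mem_commutator ((altK (AA g) (m+1)).inv_mem (hδ i)) (hα2 i)
    refine ?_ 
    rw [altK_add3 (AA g) m]
    exact Subgroup.mem_sup_right h
  have h3m : ∀ i : Fin g,
      ⁅((gen_β i)⁻¹ * φ (gen_β i))⁻¹, φ (gen_α i) * (gen_α i)⁻¹⁆ ∈ altK (AA g) (m+4) :=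
    fun i => by
    have h := Subgroup.commutator_mem_commutator ((altK (AA g) (m+1)).inv_mem (hδ i)) (hγ i)
    have le1 := altK_comm (AA g) (m+2) (by omega) (m+1) (by omega)
    exact altK_antitone (AA g) (show m+4 ≤ (m+1)+(m+2) by omega) (le1 h)
  have h4m : ∀ i : Fin g,
      ⁅((gen_β i)⁻¹ * φ (gen_β i))⁻¹, ⁅(gen_β i)⁻¹, gen_α i⁆⁆ ∈ altK (AA g) (m+4) :=
    fun i => by
    have h := Subgroup.commutator_mem_commutator ((altK (AA g) (m+1)).inv_mem (hδ i)) (hw i)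
    have le1 := altK_comm (AA g) 3 (by omega) (m+1) (by omega)
    exact altK_mono_eq (AA g) (show m+1+3 = m+4 by omega) (le1 h)
  have h5m : ∀ i : Fin g,
      ⁅φ (gen_α i) * (gen_α i)⁻¹, ⁅(gen_β i)⁻¹, gen_α i⁆⁆ ∈ altK (AA g) (m+4) :=
    fun i => by
    have h := Subgroup.commutator_mem_commutator (hγ i) (hw i)
    have le1 := altK_comm (AA g) 3 (by omega) (m+2) (by omega)
    exact altK_antitone (AA g) (show m+4 ≤ m+2+3 by omega) (le1 h)
  -- quotient facts
  have hker : ∀ x, x ∈ altK (AA g) (m+4) → f x = 1 := fun x hx =>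
    (QuotientGroup.eq_one_iff x).mpr hx
  have hcent : ∀ x, x ∈ altK (AA g) (m+3) → f x ∈ Subgroup.center _ := by
    intro x hx
    rw [Subgroup.mem_center_iff]
    intro q
    obtain ⟨y, rfl⟩ := QuotientGroup.mk'_surjective _ q
    have hxy : ⁅x, y⁆ ∈ altK (AA g) (m+4) := by
      rw [altK_add3' (AA g) m]
      refine Subgroup.mem_sup_left (Subgroup.commutator_mem_commutator hx ?_)
      rw [altK_one']; exact Subgroup.mem_top _
    have h1 := hker _ hxy
    rw [map_commutatorElement] at h1
    exact (commutatorElement_eq_one_iff_mul_comm.mp h1).symm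
  -- the per-index identity
  have claim : ∀ i : Fin g,
      f (φ ⁅(gen_β i)⁻¹, gen_α i⁆) =
        f (⁅(gen_β i)⁻¹, φ (gen_α i) * (gen_α i)⁻¹⁆ *
           ⁅((gen_β i)⁻¹ * φ (gen_β i))⁻¹, gen_α i⁆) * f ⁅(gen_β i)⁻¹, gen_α i⁆ := by
    intro i
    have e1 : φ ⁅(gen_β i)⁻¹, gen_α i⁆
        = ⁅(gen_β i * ((gen_β i)⁻¹ * φ (gen_β i)))⁻¹,
           (φ (gen_α i) * (gen_α i)⁻¹) * gen_α i⁆ := by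
      rw [map_commutatorElement, map_inv, mul_inv_cancel_left, inv_mul_cancel_right]
    have H1' := hcent _ (hz1 i)
    have H2' := hcent _ (hz2 i)
    have H3' := hker _ (h3m i)
    have H4' := hker _ (h4m i)
    have H5' := hker _ (h5m i)
    simp only [map_commutatorElement, map_mul, map_inv] at H1' H2' H3' H4' H5'
    rw [e1]
    simp only [map_commutatorElement, map_mul, map_inv]
    exact key_identity (f (gen_α i)) (f (gen_β i))
      (f (φ (gen_α i)) * (f (gen_α i))⁻¹)
      ((f (gen_β i))⁻¹ * f (φ (gen_β i)))
      (fun x => (Subgroup.mem_center_iff.mp H1' x).symm)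
      (fun x => (Subgroup.mem_center_iff.mp H2' x).symm)
      (commutatorElement_eq_one_iff_mul_comm.mp H3')
      (commutatorElement_eq_one_iff_mul_comm.mp H4')
      (commutatorElement_eq_one_iff_mul_comm.mp H5')
  -- assemble
  rw [← QuotientGroup.eq_one_iff]
  show f ((List.ofFn fun i : Fin g =>
        ⁅(gen_β i)⁻¹, φ (gen_α i) * (gen_α i)⁻¹⁆ *
        ⁅((gen_β i)⁻¹ * φ (gen_β i))⁻¹, gen_α i⁆).prod) = 1
  have hfgoal : f ((List.ofFn fun i : Fin g =>
        ⁅(gen_β i)⁻¹, φ (gen_α i) * (gen_α i)⁻¹⁆ *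
        ⁅((gen_β i)⁻¹ * φ (gen_β i))⁻¹, gen_α i⁆).prod)
      = (List.ofFn fun i : Fin g => f (⁅(gen_β i)⁻¹, φ (gen_α i) * (gen_α i)⁻¹⁆ *
          ⁅((gen_β i)⁻¹ * φ (gen_β i))⁻¹, gen_α i⁆)).prod := by
    rw [map_list_prod, List.map_ofFn]
    rfl
  have hfP : f ((List.ofFn fun i : Fin g => ⁅(gen_β i)⁻¹, gen_α i⁆).prod)
      = (List.ofFn fun i : Fin g => f ⁅(gen_β i)⁻¹, gen_α i⁆).prod := by
    rw [map_list_prod, List.map_ofFn]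
    rfl
  have hfφP : f (φ ((List.ofFn fun i : Fin g => ⁅(gen_β i)⁻¹, gen_α i⁆).prod))
      = (List.ofFn fun i : Fin g => f (φ ⁅(gen_β i)⁻¹, gen_α i⁆)).prod := by
    rw [map_list_prod φ, map_list_prod, List.map_ofFn, List.map_ofFn]
    rfl
  have hsplit : (List.ofFn fun i : Fin g => f (φ ⁅(gen_β i)⁻¹, gen_α i⁆)).prod
      = (List.ofFn fun i : Fin g => f (⁅(gen_β i)⁻¹, φ (gen_α i) * (gen_α i)⁻¹⁆ *
          ⁅((gen_β i)⁻¹ * φ (gen_β i))⁻¹, gen_α i⁆)).prod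
        * (List.ofFn fun i : Fin g => f ⁅(gen_β i)⁻¹, gen_α i⁆).prod := by
    have e := funext claim
    rw [show (fun i : Fin g => f (φ ⁅(gen_β i)⁻¹, gen_α i⁆))
        = fun i : Fin g => f (⁅(gen_β i)⁻¹, φ (gen_α i) * (gen_α i)⁻¹⁆ *
            ⁅((gen_β i)⁻¹ * φ (gen_β i))⁻¹, gen_α i⁆) * f ⁅(gen_β i)⁻¹, gen_α i⁆ from e]
    refine central_pull_ofFn g _ _ ?_
    intro i
    rw [map_mul]
    exact Subgroup.mul_mem _ (hcent _ (hz1 i)) (hcent _ (hz2 i))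
  have hfinal : (List.ofFn fun i : Fin g => f (⁅(gen_β i)⁻¹, φ (gen_α i) * (gen_α i)⁻¹⁆ *
          ⁅((gen_β i)⁻¹ * φ (gen_β i))⁻¹, gen_α i⁆)).prod
        * (List.ofFn fun i : Fin g => f ⁅(gen_β i)⁻¹, gen_α i⁆).prod
      = (List.ofFn fun i : Fin g => f ⁅(gen_β i)⁻¹, gen_α i⁆).prod := by
    rw [← hsplit, ← hfφP, hφ, hfP]
  rw [hfgoal]
  have := mul_right_cancel (hfinal.trans (one_mul _).symm)
  exact this
end
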